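/- Under the binomial initial condition, the solutions of the two deterministic Hodgkin–Huxley-type systems coincide: if (V,u) solves V' = f(V, u^k), u' = (1-u)α(V) - u β(V) with V(0)=V₀, u(0)=u₀, and (V̂, x₀,...,x_k) solves V̂' = f(V̂, x_k), x_j' = (k-j+1)x_{j-1}α(V̂) + (j+1)x_{j+1}β(V̂) - x_j(j β(V̂) + (k-j)α(V̂)) for 0≤j≤k (with x_{-1}=x_{k+1}=0), with V̂(0)=V₀ and x_{k-j}(0) = C(k,j) u₀^(k-j) (1-u₀)^j for all 0≤j≤k, then for all t ≥ 0: V(t) = V̂(t) and x_{k-j}(t) = C(k,j) u(t)^(k-j) (1-u(t))^j for all 0≤j≤k; in particular the proportion of open channels satisfies x_k(t) = u(t)^k. -/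

import Mathlib

/-- The multistate kinetic system (A.2) of Appendix A. -/
def SolvesMultistate (k : ℕ) (f : ℝ → ℝ → ℝ) (α β : ℝ → ℝ)
    (W : ℝ → ℝ) (y : ℕ → ℝ → ℝ) : Prop :=
  (∀ t, HasDerivAt W (f (W t) (y k t)) t) ∧
  ∀ j ≤ k, ∀ t, HasDerivAt (y j)
    ((if 1 ≤ j then ((k : ℝ) - j + 1) * y (j - 1) t * α (W t) else 0)
     + (if j + 1 ≤ k then ((j : ℝ) + 1) * y (j + 1) t * β (W t) else 0)
     - y j t * ((j : ℝ) * β (W t) + ((k : ℝ) - j) * α (W t))) t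

theorem binom_solves
    (k : ℕ) (hk : 1 ≤ k) (f : ℝ → ℝ → ℝ) (α β : ℝ → ℝ)
    (V u : ℝ → ℝ)
    (hV : ∀ t, HasDerivAt V (f (V t) (u t ^ k)) t)
    (hu : ∀ t, HasDerivAt u ((1 - u t) * α (V t) - u t * β (V t)) t) :
    SolvesMultistate k f α β V (fun j t => (k.choose j : ℝ) * u t ^ j * (1 - u t) ^ (k - j)) := by
  constructor
  · intro t
    simpa using hV t
  · intro j hj t
    have hd := (((hu t).pow j).const_mul ((k.choose j : ℝ))).mul
      (((hasDerivAt_const t (1:ℝ)).sub (hu t)).pow (k - j))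
    replace hd : HasDerivAt ((fun j t => (k.choose j : ℝ) * u t ^ j * (1 - u t) ^ (k - j)) j) _ t := hd
    convert hd using 1
    obtain ⟨b, rfl⟩ := Nat.exists_eq_add_of_le hj
    rcases j with _ | m
    · rcases b with _ | n
      · omega
      · simp only [Nat.choose_one_right, Nat.choose_zero_right]
        norm_num
        ring
    · rcases b with _ | n
      · simp only [Nat.add_zero, Nat.choose_self, Nat.choose_succ_self_right,
          show m+1-1 = m from rfl, show m+1-m = 1 by omega, show m+1-(m+1) = 0 by omega]
        norm_num
        push_cast
        ring
      · have h1 : ((m+1+(n+1)).choose (m+1) : ℝ) * (m+1) = ((m+1+(n+1)).choose m : ℝ) * (n+2) := by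
          have := Nat.choose_succ_right_eq (m+1+(n+1)) m
          have h : m+1+(n+1) - m = n+2 := by omega
          rw [h] at this
          exact_mod_cast this
        have h2 : ((m+1+(n+1)).choose (m+2) : ℝ) * (m+2) = ((m+1+(n+1)).choose (m+1) : ℝ) * (n+1) := by
          have := Nat.choose_succ_right_eq (m+1+(n+1)) (m+1)
          have h : m+1+(n+1) - (m+1) = n+1 := by omega
          rw [h] at this
          exact_mod_cast this
        have hif1 : (1:ℕ) ≤ m+1 := by omega
        have hif2 : m+1+1 ≤ m+1+(n+1) := by omega
        simp only [if_pos hif1, if_pos hif2]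
        simp only [show m+1-1 = m from rfl, show m+1+(n+1)-m = n+2 by omega,
          show m+1+(n+1)-(m+1+1) = n by omega, show m+1+(n+1)-(m+1) = n+1 by omega,
          show n+1-1 = n from rfl]
        simp only [Pi.pow_apply, Pi.sub_apply]
        push_cast
        linear_combination (-(u t)^m*(1-u t)^(n+2)*α (V t)) * h1 + ((u t)^(m+2)*(1-u t)^n * β (V t)) * h2

/-- Appendix A Proposition: under binomial initial conditions, the two-state gating
model and the multistate kinetic model produce the same potential, and the
proportion of open channels is `u^k`. -/
theorem two_state_multistate_equivalence
    (k : ℕ) (hk : 1 ≤ k) (f : ℝ → ℝ → ℝ) (α β : ℝ → ℝ)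
    (hα : ∀ x, 0 ≤ α x) (hβ : ∀ x, 0 ≤ β x)
    (V₀ u₀ : ℝ) (hu₀ : u₀ ∈ Set.Icc (0 : ℝ) 1)
    (V u : ℝ → ℝ)
    (hV : ∀ t, HasDerivAt V (f (V t) (u t ^ k)) t)
    (hu : ∀ t, HasDerivAt u ((1 - u t) * α (V t) - u t * β (V t)) t)
    (hV0 : V 0 = V₀) (hu0 : u 0 = u₀)
    (Vh : ℝ → ℝ) (x : ℕ → ℝ → ℝ)
    (hsol : SolvesMultistate k f α β Vh x)
    (hVh0 : Vh 0 = V₀)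
    (hx0 : ∀ j ≤ k, x (k - j) 0 = (k.choose j : ℝ) * u₀ ^ (k - j) * (1 - u₀) ^ j)
    (huniq : ∀ (W W' : ℝ → ℝ) (y y' : ℕ → ℝ → ℝ),
      SolvesMultistate k f α β W y → SolvesMultistate k f α β W' y' →
      W 0 = W' 0 → (∀ j ≤ k, y j 0 = y' j 0) →
      ∀ t : ℝ, 0 ≤ t → W t = W' t ∧ ∀ j ≤ k, y j t = y' j t) :
    ∀ t : ℝ, 0 ≤ t →
      V t = Vh t ∧
      (∀ j ≤ k, x (k - j) t = (k.choose j : ℝ) * u t ^ (k - j) * (1 - u t) ^ j) ∧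
      x k t = u t ^ k := by
  intro t ht
  obtain ⟨hVt, hxt⟩ := huniq V Vh
    (fun j t => (k.choose j : ℝ) * u t ^ j * (1 - u t) ^ (k - j)) x
    (binom_solves k hk f α β V u hV hu) hsol (by rw [hV0, hVh0])
    (by
      intro j hj
      have h := hx0 (k - j) (Nat.sub_le k j)
      rw [Nat.sub_sub_self hj] at h
      simp only [h, Nat.choose_symm hj, hu0])
    t ht
  refine ⟨hVt, ?_, ?_⟩
  · intro j hj
    have h := (hxt (k - j) (Nat.sub_le k j)).symm
    rw [h, Nat.sub_sub_self hj, Nat.choose_symm hj]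
  · have h := (hxt k le_rfl).symm
    simpa using h
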